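/- Let X ∈ R^{d×N} have SVD X = U Σ V^T with rank r, and let the noise A satisfy that X + A is full rank. Then for the linear DAE minimizer W* = P_k(X)(X+A)^†, applied to noiseless test data x = U l in the span of U, the prediction W* x depends only on the top-k singular subspace of X and the restriction of (X+A)^† to that subspace; in particular, if A = 0, then W*(x) = P_{U_k} x, the orthogonal projection of x onto the top-k left singular subspace of X. -/

import Mathlib

open Matrix

/-- Squared Frobenius norm of a real matrix. -/
noncomputable def frobSq {m n : ℕ} (M : Matrix (Fin m) (Fin n) ℝ) : ℝ :=
  ∑ i, ∑ j, (M i j) ^ 2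

/-- `B` satisfies the four Moore–Penrose conditions for `A`. -/
def IsMoorePenroseInv {m n : ℕ} (A : Matrix (Fin m) (Fin n) ℝ)
    (B : Matrix (Fin n) (Fin m) ℝ) : Prop :=
  A * B * A = A ∧ B * A * B = B ∧ (A * B)ᵀ = A * B ∧ (B * A)ᵀ = B * A

/-- `P` is a best rank-`k` approximation of `X` in Frobenius norm. -/
noncomputable def IsBestRankApprox {m n : ℕ} (k : ℕ) (X P : Matrix (Fin m) (Fin n) ℝ) : Prop :=
  P.rank ≤ k ∧ ∀ Q : Matrix (Fin m) (Fin n) ℝ, Q.rank ≤ k → frobSq (X - P) ≤ frobSq (X - Q)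

section Aux

/-! ### Inner-product space lemmas -/

variable {E : Type*} [NormedAddCommGroup E] [InnerProductSpace ℝ E]

lemma key_identity {m : ℕ} {w : Fin m → E} (hw : Orthonormal ℝ w) (v : E) (γ : Fin m → ℝ) :
    ‖v - ∑ a, γ a • w a‖^2
      = ‖v‖^2 - ∑ a, (inner ℝ (w a) v : ℝ)^2 + ∑ a, (γ a - inner ℝ (w a) v)^2 := by
  have h1 : (inner ℝ v (∑ a, γ a • w a) : ℝ) = ∑ a, γ a * inner ℝ (w a) v := by
    rw [inner_sum]
    refine Finset.sum_congr rfl fun a _ => ?_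
    rw [real_inner_smul_right, real_inner_comm]
  have h2 : (inner ℝ (∑ a, γ a • w a) (∑ a, γ a • w a) : ℝ) = ∑ a, (γ a)^2 := by
    have := hw.inner_sum γ γ Finset.univ
    simpa [sq] using this
  have h3 : ‖v - ∑ a, γ a • w a‖^2
      = ‖v‖^2 - 2 * ∑ a, γ a * inner ℝ (w a) v + ∑ a, (γ a)^2 := by
    rw [← real_inner_self_eq_norm_sq, ← real_inner_self_eq_norm_sq, inner_sub_sub_self, h1, h2]
    have h1' : (inner ℝ (∑ a, γ a • w a) v : ℝ) = ∑ a, γ a * inner ℝ (w a) v := by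
      rw [real_inner_comm]; exact h1
    rw [h1']; ring
  rw [h3]
  have : ∑ a, (γ a - inner ℝ (w a) v)^2
      = ∑ a, ((γ a)^2 - 2*(γ a * inner ℝ (w a) v) + (inner ℝ (w a) v :ℝ)^2) := by
    refine Finset.sum_congr rfl fun a _ => ?_; ring
  rw [this, Finset.sum_add_distrib, Finset.sum_sub_distrib, ← Finset.mul_sum]
  ring

lemma bessel {m : ℕ} {w : Fin m → E} (hw : Orthonormal ℝ w) (v : E) :
    ∑ a, (inner ℝ (w a) v : ℝ)^2 ≤ ‖v‖^2 := by
  have := key_identity hw v (fun a => inner ℝ (w a) v)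
  simp only [sub_self] at this
  norm_num at this
  nlinarith [sq_nonneg ‖v - ∑ a, (inner ℝ (w a) v : ℝ) • w a‖]

lemma bessel_eq {m : ℕ} {w : Fin m → E} (hw : Orthonormal ℝ w) (v : E)
    (h : ∑ a, (inner ℝ (w a) v : ℝ)^2 = ‖v‖^2) : v = ∑ a, (inner ℝ (w a) v : ℝ) • w a := by
  have := key_identity hw v (fun a => inner ℝ (w a) v)
  simp only [sub_self, h] at this
  have h0 : ‖v - ∑ a, (inner ℝ (w a) v : ℝ) • w a‖^2 = 0 := by
    rw [this]; simp
  have := pow_eq_zero_iff (n := 2) (by norm_num) |>.mp h0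
  rw [norm_eq_zero, sub_eq_zero] at this
  exact this

/-! ### Frobenius norm lemmas -/

lemma frobSq_eq_trace {m n : ℕ} (M : Matrix (Fin m) (Fin n) ℝ) :
    frobSq M = (M * Mᵀ).trace := by
  simp [frobSq, trace, Matrix.mul_apply, Matrix.diag, sq]

lemma frobSq_nonneg {m n : ℕ} (M : Matrix (Fin m) (Fin n) ℝ) : 0 ≤ frobSq M := by
  apply Finset.sum_nonneg; intro i _; apply Finset.sum_nonneg; intro j _; positivity

lemma frobSq_eq_zero {m n : ℕ} {M : Matrix (Fin m) (Fin n) ℝ} (h : frobSq M = 0) : M = 0 := by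
  ext i j
  have h1 : ∀ i ∈ Finset.univ, (0:ℝ) ≤ ∑ j, (M i j)^2 := by
    intro i _; apply Finset.sum_nonneg; intro j _; positivity
  have h2 := (Finset.sum_eq_zero_iff_of_nonneg h1).mp h i (Finset.mem_univ i)
  have h3 : ∀ j ∈ Finset.univ, (0:ℝ) ≤ (M i j)^2 := by intro j _; positivity
  have h4 := (Finset.sum_eq_zero_iff_of_nonneg h3).mp h2 j (Finset.mem_univ j)
  simpa using pow_eq_zero_iff (n := 2) (by norm_num) |>.mp h4

lemma frobSq_neg {m n : ℕ} (M : Matrix (Fin m) (Fin n) ℝ) : frobSq (-M) = frobSq M := by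
  simp [frobSq, Matrix.neg_apply]

lemma frobSq_split {a n r : ℕ} (M : Matrix (Fin a) (Fin n) ℝ) (V : Matrix (Fin n) (Fin r) ℝ)
    (hV : Vᵀ * V = 1) : frobSq M = frobSq (M * V) + frobSq (M - M * V * Vᵀ) := by
  rw [frobSq_eq_trace, frobSq_eq_trace, frobSq_eq_trace]
  have c1 : M * V * Vᵀ * (M * V * Vᵀ)ᵀ = (M * V) * (M * V)ᵀ := by
    rw [transpose_mul, transpose_transpose, Matrix.mul_assoc (M*V) Vᵀ,
      ← Matrix.mul_assoc Vᵀ V, hV, Matrix.one_mul]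
  have c2 : M * (M * V * Vᵀ)ᵀ = (M * V) * (M * V)ᵀ := by
    rw [transpose_mul, transpose_transpose, transpose_mul, ← Matrix.mul_assoc]
  have c3 : (M * V * Vᵀ) * Mᵀ = (M * V) * (M * V)ᵀ := by
    rw [transpose_mul, Matrix.mul_assoc (M*V)]
  have e1 : (M - M * V * Vᵀ) * (M - M * V * Vᵀ)ᵀ = M * Mᵀ - (M * V) * (M * V)ᵀ := by
    rw [transpose_sub, Matrix.sub_mul, Matrix.mul_sub, Matrix.mul_sub, c1, c2, c3]
    abel
  rw [e1, trace_sub]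
  ring

lemma frobSq_UDV {dd r n : ℕ} (U : Matrix (Fin dd) (Fin r) ℝ) (V : Matrix (Fin n) (Fin r) ℝ)
    (c : Fin r → ℝ) (hU : Uᵀ * U = 1) (hV : Vᵀ * V = 1) :
    frobSq (U * diagonal c * Vᵀ) = ∑ j, c j ^ 2 := by
  rw [frobSq_eq_trace]
  have : (U * diagonal c * Vᵀ) * (U * diagonal c * Vᵀ)ᵀ
      = U * (diagonal c * diagonal c) * Uᵀ := by
    rw [transpose_mul, transpose_mul, transpose_transpose, diagonal_transpose]
    rw [Matrix.mul_assoc (U * diagonal c) Vᵀ, ← Matrix.mul_assoc Vᵀ V, hV, Matrix.one_mul]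
    rw [Matrix.mul_assoc U, Matrix.mul_assoc U, Matrix.mul_assoc (diagonal c)]
  rw [this, Matrix.trace_mul_comm, ← Matrix.mul_assoc, hU, Matrix.one_mul,
    diagonal_mul_diagonal, trace_diagonal]
  simp [sq]

/-! ### Uniqueness of the Moore–Penrose inverse -/

lemma mp_unique {m n : ℕ} {A : Matrix (Fin m) (Fin n) ℝ} {B C : Matrix (Fin n) (Fin m) ℝ}
    (hB : IsMoorePenroseInv A B) (hC : IsMoorePenroseInv A C) : B = C := by
  obtain ⟨hB1, hB2, hB3, hB4⟩ := hB
  obtain ⟨hC1, hC2, hC3, hC4⟩ := hC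
  have hB2' : B * (A * B) = B := by rw [← Matrix.mul_assoc]; exact hB2
  have hC2' : C * (A * C) = C := by rw [← Matrix.mul_assoc]; exact hC2
  have hB3' : Bᵀ * Aᵀ = A * B := by rw [← transpose_mul]; exact hB3
  have hB4' : Aᵀ * Bᵀ = B * A := by rw [← transpose_mul]; exact hB4
  have hC3' : Cᵀ * Aᵀ = A * C := by rw [← transpose_mul]; exact hC3
  have hC4' : Aᵀ * Cᵀ = C * A := by rw [← transpose_mul]; exact hC4
  have hAtB : Aᵀ * (Bᵀ * Aᵀ) = Aᵀ := by
    have := congrArg Matrix.transpose hB1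
    simpa [transpose_mul, Matrix.mul_assoc] using this
  have hAtC : Aᵀ * (Cᵀ * Aᵀ) = Aᵀ := by
    have := congrArg Matrix.transpose hC1
    simpa [transpose_mul, Matrix.mul_assoc] using this
  have e1 : B = B * (A * C) := by
    calc B = B * (A * B) := hB2'.symm
    _ = B * (Bᵀ * Aᵀ) := by rw [hB3']
    _ = B * (Bᵀ * (Aᵀ * (Cᵀ * Aᵀ))) := by rw [hAtC]
    _ = (B * (Bᵀ * Aᵀ)) * (Cᵀ * Aᵀ) := by simp only [Matrix.mul_assoc]
    _ = (B * (A * B)) * (Cᵀ * Aᵀ) := by rw [hB3']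
    _ = B * (Cᵀ * Aᵀ) := by rw [hB2']
    _ = B * (A * C) := by rw [hC3']
  have e2 : C = B * (A * C) := by
    calc C = C * (A * C) := hC2'.symm
    _ = (C * A) * C := by rw [Matrix.mul_assoc]
    _ = (Aᵀ * Cᵀ) * C := by rw [hC4']
    _ = Aᵀ * (Cᵀ * C) := by rw [Matrix.mul_assoc]
    _ = (Aᵀ * (Bᵀ * Aᵀ)) * (Cᵀ * C) := by rw [hAtB]
    _ = (Aᵀ * Bᵀ) * ((Aᵀ * Cᵀ) * C) := by simp only [Matrix.mul_assoc]
    _ = (B * A) * ((C * A) * C) := by rw [hB4', hC4']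
    _ = (B * A) * C := by rw [Matrix.mul_assoc C, hC2']
    _ = B * (A * C) := by rw [Matrix.mul_assoc]
  rw [e1, ← e2]

/-! ### Sums over initial segments -/

lemma sum_castLE {r k : ℕ} (hkr : k ≤ r) (g : Fin r → ℝ) :
    ∑ a : Fin k, g (Fin.castLE hkr a) = ∑ j : Fin r, if (j : ℕ) < k then g j else 0 := by
  have hset : (Finset.univ.map (Fin.castLEEmb hkr))
      = Finset.univ.filter (fun j : Fin r => (j:ℕ) < k) := by
    ext j
    simp only [Finset.mem_map, Finset.mem_filter, Finset.mem_univ, true_and]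
    constructor
    · rintro ⟨a, rfl⟩; simp [a.isLt]
    · intro hj; exact ⟨⟨(j:ℕ), hj⟩, rfl⟩
  rw [← Finset.sum_filter, ← hset, Finset.sum_map]
  rfl

/-! ### The weight-optimization lemma -/

lemma weight_lemma {r k : ℕ} (hkr : k ≤ r) (s : Fin r → ℝ) (hs : StrictAnti s)
    (hspos : ∀ i, 0 < s i) (p : Fin r → ℝ) (h0 : ∀ j, 0 ≤ p j) (h1 : ∀ j, p j ≤ 1)
    (hsum : ∑ j, p j ≤ (k : ℝ))
    (hval : (∑ j : Fin r, if (j:ℕ) < k then (s j)^2 else 0) ≤ ∑ j, (s j)^2 * p j) :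
    ∀ j : Fin r, p j = if (j : ℕ) < k then 1 else 0 := by
  rcases Nat.eq_zero_or_pos k with hk0 | hkpos
  · subst hk0
    intro j
    simp only [Nat.not_lt_zero, if_false]
    have hle : p j ≤ 0 := by
      calc p j ≤ ∑ j', p j' := Finset.single_le_sum (fun i _ => h0 i) (Finset.mem_univ j)
      _ ≤ 0 := by simpa using hsum
    linarith [h0 j]
  · have hkr1 : k - 1 < r := by omega
    set t : ℝ := if h : k < r then ((s ⟨k-1, hkr1⟩)^2 + (s ⟨k, h⟩)^2)/2 else (s ⟨k-1, hkr1⟩)^2/2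
      with ht
    have hsq : ∀ i j : Fin r, i ≤ j → (s j)^2 ≤ (s i)^2 := by
      intro i j hij
      have h1 := hs.antitone hij
      nlinarith [hspos i, hspos j]
    have hsqlt : ∀ i j : Fin r, i < j → (s j)^2 < (s i)^2 := by
      intro i j hij
      have h1 := hs hij
      nlinarith [hspos i, hspos j]
    have ht0 : 0 < t := by
      rw [ht]; split
      · have := hspos (⟨k-1, hkr1⟩ : Fin r); have := hspos (⟨k, by assumption⟩ : Fin r); positivity
      · have := hspos (⟨k-1, hkr1⟩ : Fin r); positivity
    have htlt : ∀ j : Fin r, (j : ℕ) < k → t < (s j)^2 := by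
      intro j hj
      have hjk : j ≤ (⟨k-1, hkr1⟩ : Fin r) := by
        rw [Fin.le_def]; simp; omega
      have h2 : (s ⟨k-1, hkr1⟩)^2 ≤ (s j)^2 := hsq _ _ hjk
      rw [ht]; split
      · rename_i h
        have h3 : (s ⟨k, h⟩)^2 < (s ⟨k-1, hkr1⟩)^2 := by
          apply hsqlt; rw [Fin.lt_def]; simp; omega
        nlinarith
      · have := hspos (⟨k-1, hkr1⟩ : Fin r)
        nlinarith
    have htgt : ∀ j : Fin r, k ≤ (j : ℕ) → (s j)^2 < t := by
      intro j hj
      have hk : k < r := lt_of_le_of_lt hj j.isLt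
      have h2 : (s j)^2 ≤ (s ⟨k, hk⟩)^2 := by
        apply hsq; rw [Fin.le_def]; simpa using hj
      rw [ht, dif_pos hk]
      have h3 : (s ⟨k, hk⟩)^2 < (s ⟨k-1, hkr1⟩)^2 := by
        apply hsqlt; rw [Fin.lt_def]; simp; omega
      nlinarith
    have hcount : ∑ j : Fin r, (if (j:ℕ) < k then (1:ℝ) else 0) = k := by
      rw [← sum_castLE hkr (fun _ => (1:ℝ))]
      simp
    set q : Fin r → ℝ := fun j => ((s j)^2 - t) * p j with hq
    set M : Fin r → ℝ := fun j => if (j:ℕ) < k then (s j)^2 - t else 0 with hM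
    have hqM : ∀ j, q j ≤ M j := by
      intro j
      rw [hq, hM]
      by_cases hj : (j:ℕ) < k
      · simp only [hj, if_true]
        have := htlt j hj
        nlinarith [h1 j, h0 j]
      · simp only [hj, if_false]
        have := htgt j (by omega)
        nlinarith [h0 j]
    have hsumM : ∑ j, M j = (∑ j : Fin r, if (j:ℕ) < k then (s j)^2 else 0) - t * k := by
      rw [hM, ← hcount, Finset.mul_sum, ← Finset.sum_sub_distrib]
      apply Finset.sum_congr rfl
      intro j _
      by_cases hj : (j:ℕ) < k <;> simp [hj]
    have hsumq : ∑ j, q j = ∑ j, (s j)^2 * p j - t * ∑ j, p j := by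
      rw [hq, Finset.mul_sum, ← Finset.sum_sub_distrib]
      apply Finset.sum_congr rfl; intro j _; ring
    have hle1 : ∑ j, q j ≤ ∑ j, M j := Finset.sum_le_sum (fun j _ => hqM j)
    have hge : ∑ j, M j ≤ ∑ j, q j := by
      rw [hsumM, hsumq]
      have : t * ∑ j, p j ≤ t * k := by
        apply mul_le_mul_of_nonneg_left hsum (le_of_lt ht0)
      linarith
    have heq : ∀ j, q j = M j := by
      have hz : ∑ j, (M j - q j) = 0 := by
        rw [Finset.sum_sub_distrib]; linarith
      intro j
      have := (Finset.sum_eq_zero_iff_of_nonneg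
        (fun i _ => by linarith [hqM i])).mp hz j (Finset.mem_univ j)
      linarith
    intro j
    have hj := heq j
    rw [hq, hM] at hj
    by_cases hjk : (j:ℕ) < k
    · simp only [hjk, if_true] at hj ⊢
      have hne : (s j)^2 - t ≠ 0 := by have := htlt j hjk; linarith
      have h2 : ((s j)^2 - t) * p j = ((s j)^2 - t) * 1 := by rw [mul_one]; exact hj
      exact mul_left_cancel₀ hne h2
    · simp only [hjk, if_false] at hj ⊢
      have hne : (s j)^2 - t ≠ 0 := by have := htgt j (by omega); linarith
      rcases mul_eq_zero.mp hj with h | h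
      · exact absurd h hne
      · exact h

/-! ### Columns of matrices as Euclidean vectors -/

noncomputable def colE {d n : ℕ} (M : Matrix (Fin d) (Fin n) ℝ) (j : Fin n) :
    EuclideanSpace ℝ (Fin d) := WithLp.toLp 2 (fun i => M i j)

lemma inner_colE {d n m : ℕ} (M : Matrix (Fin d) (Fin n) ℝ) (N : Matrix (Fin d) (Fin m) ℝ)
    (a : Fin n) (b : Fin m) : (inner ℝ (colE M a) (colE N b) : ℝ) = (Mᵀ * N) a b := by
  simp [colE, PiLp.inner_apply, Matrix.mul_apply, transpose_apply, mul_comm]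

lemma normsq_eq {d : ℕ} (x : EuclideanSpace ℝ (Fin d)) : ‖x‖^2 = ∑ i, (x i)^2 := by
  rw [← real_inner_self_eq_norm_sq, PiLp.inner_apply]
  simp [sq]

lemma orthonormal_colE {d n : ℕ} {U : Matrix (Fin d) (Fin n) ℝ} (hU : Uᵀ * U = 1) :
    Orthonormal ℝ (colE U) := by
  rw [orthonormal_iff_ite]
  intro a b
  rw [inner_colE, hU, Matrix.one_apply]

lemma finrank_span_colE_le {d n : ℕ} (M : Matrix (Fin d) (Fin n) ℝ) :
    Module.finrank ℝ (Submodule.span ℝ (Set.range (colE M))) ≤ M.rank := by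
  set e : (Fin d → ℝ) ≃ₗ[ℝ] EuclideanSpace ℝ (Fin d) :=
    (WithLp.linearEquiv 2 ℝ (Fin d → ℝ)).symm with he
  have hmap : Submodule.span ℝ (Set.range (colE M))
      = Submodule.map (e : (Fin d → ℝ) →ₗ[ℝ] EuclideanSpace ℝ (Fin d))
        (Submodule.span ℝ (Set.range Mᵀ)) := by
    rw [Submodule.map_span]
    congr 1
    ext x
    constructor
    · rintro ⟨j, rfl⟩; exact ⟨Mᵀ j, ⟨j, rfl⟩, rfl⟩
    · rintro ⟨y, ⟨j, rfl⟩, rfl⟩; exact ⟨j, rfl⟩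
  rw [hmap, LinearEquiv.finrank_map_eq, Matrix.rank_eq_finrank_span_cols]
  exact le_rfl

lemma coe_onb_orthonormal {d : ℕ} (W : Submodule ℝ (EuclideanSpace ℝ (Fin d)))
    {ι : Type*} [Fintype ι] [DecidableEq ι] (b : OrthonormalBasis ι ℝ W) :
    Orthonormal ℝ (fun a => ((b a : W) : EuclideanSpace ℝ (Fin d))) := by
  rw [orthonormal_iff_ite]
  intro a c
  rw [← Submodule.coe_inner]
  exact orthonormal_iff_ite.mp b.orthonormal a c

lemma coe_repr {d : ℕ} (W : Submodule ℝ (EuclideanSpace ℝ (Fin d)))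
    {m : ℕ} (b : OrthonormalBasis (Fin m) ℝ W) (x : W) :
    (x : EuclideanSpace ℝ (Fin d)) = ∑ a, b.repr x a • ((b a : W) : EuclideanSpace ℝ (Fin d)) := by
  have h := b.sum_repr x
  calc (x : EuclideanSpace ℝ (Fin d))
      = ((∑ a, b.repr x a • b a : W) : EuclideanSpace ℝ (Fin d)) := by rw [h]
  _ = _ := by push_cast [Submodule.coe_sum]; rfl

lemma euclid_sum_apply {d n : ℕ} (c : Fin n → ℝ) (x : Fin n → EuclideanSpace ℝ (Fin d))
    (i : Fin d) : (∑ j, c j • x j) i = ∑ j, c j * x j i := by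
  induction (Finset.univ : Finset (Fin n)) using Finset.induction with
  | empty => simp
  | @insert a s h ih => rw [Finset.sum_insert h, Finset.sum_insert h, ← ih]; rfl

end Aux

/-! ### Eckart–Young uniqueness: the best rank-`k` approximation is the truncated SVD -/

lemma best_rank_eq {d N r k : ℕ} (hkr : k ≤ r)
    (X : Matrix (Fin d) (Fin N) ℝ)
    (U : Matrix (Fin d) (Fin r) ℝ) (V : Matrix (Fin N) (Fin r) ℝ) (s : Fin r → ℝ)
    (hU : Uᵀ * U = 1) (hV : Vᵀ * V = 1)
    (hs : StrictAnti s) (hspos : ∀ i, 0 < s i)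
    (hSVD : X = U * Matrix.diagonal s * Vᵀ)
    (Pk : Matrix (Fin d) (Fin N) ℝ) (hPk : IsBestRankApprox k X Pk) :
    Pk = U * diagonal (fun j : Fin r => if (j:ℕ) < k then s j else 0) * Vᵀ := by
  classical
  set sk : Fin r → ℝ := fun j => if (j:ℕ) < k then s j else 0 with hsk
  set T : Matrix (Fin d) (Fin N) ℝ := U * diagonal sk * Vᵀ with hT
  have hrankT : T.rank ≤ k := by
    calc T.rank ≤ (U * diagonal sk).rank := Matrix.rank_mul_le_left _ _
    _ ≤ (diagonal sk).rank := Matrix.rank_mul_le_right _ _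
    _ = Fintype.card {i // sk i ≠ 0} := Matrix.rank_diagonal sk
    _ ≤ k := by
        have hlt : ∀ i : Fin r, sk i ≠ 0 → (i:ℕ) < k := by
          intro i hi
          by_contra h
          apply hi
          simp only [hsk]
          rw [if_neg h]
        have hcard : Fintype.card {i : Fin r // sk i ≠ 0} ≤ Fintype.card (Fin k) := by
          apply Fintype.card_le_of_injective (fun x => (⟨(x.1 : ℕ), hlt x.1 x.2⟩ : Fin k))
          intro x y hxy
          simp only [Fin.mk.injEq] at hxy
          exact Subtype.ext (Fin.ext hxy)
        simpa using hcard
  have hXT : X - T = U * diagonal (fun j : Fin r => s j - sk j) * Vᵀ := by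
    rw [hSVD, hT]
    have hd : diagonal (fun j : Fin r => s j - sk j) = diagonal s - diagonal sk := by
      rw [diagonal_sub]
    rw [hd, Matrix.mul_sub, Matrix.sub_mul]
  have hfrobT : frobSq (X - T) = ∑ j : Fin r, (if k ≤ (j:ℕ) then s j ^2 else 0) := by
    rw [hXT, frobSq_UDV U V _ hU hV]
    apply Finset.sum_congr rfl; intro j _
    by_cases hj : (j:ℕ) < k
    · rw [if_neg (by omega)]
      simp [hsk, hj]
    · rw [if_pos (by omega)]
      simp [hsk, hj]
  set L : ℝ := ∑ j : Fin r, (if k ≤ (j:ℕ) then (s j)^2 else 0) with hL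
  have hmin : frobSq (X - Pk) ≤ L := by
    rw [← hfrobT]
    exact hPk.2 T hrankT
  have hXV : X * V = U * diagonal s := by
    rw [hSVD, Matrix.mul_assoc, hV, Matrix.mul_one]
  have hXVV : X * V * Vᵀ = X := by rw [hXV, ← hSVD]
  have hsplit : frobSq (X - Pk) = frobSq (X * V - Pk * V) + frobSq (Pk * V * Vᵀ - Pk) := by
    have h1 := frobSq_split (X - Pk) V hV
    have h2 : (X - Pk) * V = X * V - Pk * V := Matrix.sub_mul _ _ _
    have h3 : (X - Pk) - (X - Pk) * V * Vᵀ = Pk * V * Vᵀ - Pk := by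
      rw [h2, Matrix.sub_mul, hXVV]; abel
    rw [h1, h3, h2]
  -- Euclidean setup
  set u : Fin r → EuclideanSpace ℝ (Fin d) := colE U with hu_def
  have hu : Orthonormal ℝ u := orthonormal_colE hU
  set W : Submodule ℝ (EuclideanSpace ℝ (Fin d)) :=
    Submodule.span ℝ (Set.range (colE Pk)) with hW
  set m : ℕ := Module.finrank ℝ W with hm_def
  have hmk : m ≤ k := le_trans (finrank_span_colE_le Pk) hPk.1
  set b := stdOrthonormalBasis ℝ W with hb
  set w : Fin m → EuclideanSpace ℝ (Fin d) :=
    fun a => ((b a : W) : EuclideanSpace ℝ (Fin d)) with hw_def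
  have hw : Orthonormal ℝ w := coe_onb_orthonormal W b
  have hcmem : ∀ j : Fin r, colE (Pk * V) j ∈ W := by
    intro j
    have hcol : colE (Pk * V) j = ∑ j', V j' j • colE Pk j' := by
      ext i
      show (Pk * V) i j = (∑ j', V j' j • colE Pk j') i
      rw [euclid_sum_apply]
      simp [colE, Matrix.mul_apply, mul_comm]
    rw [hcol]
    exact Submodule.sum_mem _
      (fun j' _ => Submodule.smul_mem _ _ (Submodule.subset_span ⟨j', rfl⟩))
  set γ : Fin r → Fin m → ℝ := fun j a => b.repr ⟨colE (Pk * V) j, hcmem j⟩ a with hγdef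
  have hγ : ∀ j, colE (Pk * V) j = ∑ a, γ j a • w a := by
    intro j
    have := coe_repr W b ⟨colE (Pk * V) j, hcmem j⟩
    simpa using this
  set p : Fin r → ℝ := fun j => ∑ a, (inner ℝ (w a) (u j) : ℝ)^2 with hp_def
  have hp0 : ∀ j, 0 ≤ p j := fun j => Finset.sum_nonneg fun a _ => sq_nonneg _
  have hunorm : ∀ j, ‖u j‖ = 1 := fun j => hu.1 j
  have hwnorm : ∀ a, ‖w a‖ = 1 := fun a => hw.1 a
  have hp1 : ∀ j, p j ≤ 1 := by
    intro j
    have hb1 := bessel hw (u j)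
    rw [hunorm j] at hb1
    simpa using hb1
  have hpsum : ∑ j, p j ≤ (k : ℝ) := by
    have h1 : ∑ j, p j = ∑ a : Fin m, ∑ j : Fin r, (inner ℝ (u j) (w a) : ℝ)^2 := by
      rw [hp_def, Finset.sum_comm]
      apply Finset.sum_congr rfl; intro a _
      apply Finset.sum_congr rfl; intro j _
      rw [real_inner_comm]
    rw [h1]
    calc ∑ a : Fin m, ∑ j, (inner ℝ (u j) (w a) : ℝ)^2 ≤ ∑ _a : Fin m, (1:ℝ) := by
          apply Finset.sum_le_sum; intro a _
          have hb2 := bessel hu (w a)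
          rwa [hwnorm a, one_pow] at hb2
    _ = m := by simp
    _ ≤ k := by exact_mod_cast hmk
  have hfrob1 : frobSq (X * V - Pk * V)
      = ∑ j : Fin r, ‖(s j • u j - colE (Pk * V) j : EuclideanSpace ℝ (Fin d))‖^2 := by
    rw [frobSq, Finset.sum_comm]
    apply Finset.sum_congr rfl
    intro j _
    rw [normsq_eq]
    apply Finset.sum_congr rfl
    intro i _
    have hentry : (s j • u j - colE (Pk * V) j : EuclideanSpace ℝ (Fin d)) i
        = s j * U i j - (Pk * V) i j := rfl
    rw [hentry, hXV]
    simp [Matrix.sub_apply, Matrix.mul_diagonal, mul_comm]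
  have hcol_eq : ∀ j : Fin r,
      ‖(s j • u j - colE (Pk * V) j : EuclideanSpace ℝ (Fin d))‖^2
        = (s j)^2 * (1 - p j) + ∑ a, (γ j a - s j * inner ℝ (w a) (u j))^2 := by
    intro j
    rw [hγ j]
    have hki := key_identity hw (s j • u j) (γ j)
    rw [hki]
    have h1 : ‖s j • u j‖^2 = (s j)^2 := by
      rw [norm_smul, hunorm j, mul_one]
      simp [sq_abs]
    have h2 : ∀ a : Fin m, (inner ℝ (w a) (s j • u j) : ℝ) = s j * inner ℝ (w a) (u j) :=
      fun a => real_inner_smul_right _ _ _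
    simp only [h2]
    rw [h1]
    have h3 : ∑ a, (s j * (inner ℝ (w a) (u j) : ℝ))^2 = (s j)^2 * p j := by
      rw [hp_def, Finset.mul_sum]
      apply Finset.sum_congr rfl; intro a _; ring
    rw [h3]; ring
  have hfrob2 : 0 ≤ frobSq (Pk * V * Vᵀ - Pk) := frobSq_nonneg _
  have hR0 : ∀ j, 0 ≤ ∑ a, (γ j a - s j * (inner ℝ (w a) (u j) : ℝ))^2 :=
    fun j => Finset.sum_nonneg (fun a _ => sq_nonneg _)
  have hLsplit : (∑ j : Fin r, (if (j:ℕ) < k then (s j)^2 else 0)) + L = ∑ j, (s j)^2 := by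
    rw [hL, ← Finset.sum_add_distrib]
    apply Finset.sum_congr rfl
    intro j _
    by_cases hj : (j:ℕ) < k
    · rw [if_pos hj, if_neg (by omega)]; ring
    · rw [if_neg hj, if_pos (by omega)]; ring
  have hlow : ∀ j, (s j)^2 * (1 - p j)
      ≤ ‖(s j • u j - colE (Pk * V) j : EuclideanSpace ℝ (Fin d))‖^2 := by
    intro j; rw [hcol_eq j]; linarith [hR0 j]
  have hfrob1_ge : ∑ j, (s j)^2 * (1 - p j) ≤ frobSq (X * V - Pk * V) := by
    rw [hfrob1]; exact Finset.sum_le_sum (fun j _ => hlow j)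
  have htot : frobSq (X * V - Pk * V) + frobSq (Pk * V * Vᵀ - Pk) ≤ L := by
    rw [← hsplit]; exact hmin
  have hval : (∑ j : Fin r, if (j:ℕ) < k then (s j)^2 else 0) ≤ ∑ j, (s j)^2 * p j := by
    have h1 : ∑ j, (s j)^2 * (1 - p j) = ∑ j, (s j)^2 - ∑ j, (s j)^2 * p j := by
      rw [← Finset.sum_sub_distrib]; apply Finset.sum_congr rfl; intro j _; ring
    linarith [hfrob1_ge, hLsplit, htot, hfrob2]
  have hpval := weight_lemma hkr s hs hspos p hp0 hp1 hpsum hval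
  have hsum_eq : ∑ j, (s j)^2 * (1 - p j) = L := by
    rw [hL]; apply Finset.sum_congr rfl
    intro j _
    rw [hpval j]
    by_cases hj : (j:ℕ) < k
    · rw [if_pos hj, if_neg (by omega)]; ring
    · rw [if_neg hj, if_pos (by omega)]; ring
  have hfrob1_eq : frobSq (X * V - Pk * V)
      = L + ∑ j, ∑ a, (γ j a - s j * (inner ℝ (w a) (u j) : ℝ))^2 := by
    rw [hfrob1, ← hsum_eq, ← Finset.sum_add_distrib]
    apply Finset.sum_congr rfl; intro j _; rw [hcol_eq j]
  have hRzero : ∀ j, ∀ a, γ j a = s j * (inner ℝ (w a) (u j) : ℝ) := by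
    have hRsum : ∑ j, ∑ a, (γ j a - s j * (inner ℝ (w a) (u j) : ℝ))^2 ≤ 0 := by
      rw [hfrob1_eq] at htot; linarith [hfrob2]
    intro j a
    have h1 : ∑ j, ∑ a, (γ j a - s j * (inner ℝ (w a) (u j) : ℝ))^2 = 0 :=
      le_antisymm hRsum (Finset.sum_nonneg fun j _ => hR0 j)
    have h2 := (Finset.sum_eq_zero_iff_of_nonneg (fun j _ => hR0 j)).mp h1 j (Finset.mem_univ j)
    have h3 := (Finset.sum_eq_zero_iff_of_nonneg
      (fun a _ => sq_nonneg _)).mp h2 a (Finset.mem_univ a)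
    have := pow_eq_zero_iff (n:=2) (by norm_num) |>.mp h3
    linarith [this]
  have hfrob2_zero : Pk * V * Vᵀ - Pk = 0 := by
    apply frobSq_eq_zero
    rw [hfrob1_eq] at htot
    have hRs : 0 ≤ ∑ j, ∑ a, (γ j a - s j * (inner ℝ (w a) (u j) : ℝ))^2 :=
      Finset.sum_nonneg fun j _ => hR0 j
    linarith [frobSq_nonneg (Pk * V * Vᵀ - Pk)]
  have hcols : ∀ j : Fin r, colE (Pk * V) j = sk j • u j := by
    intro j
    have hc1 : colE (Pk * V) j = s j • (∑ a, (inner ℝ (w a) (u j) : ℝ) • w a) := by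
      rw [hγ j, Finset.smul_sum]
      apply Finset.sum_congr rfl; intro a _
      rw [hRzero j a, smul_smul]
    by_cases hj : (j:ℕ) < k
    · have hpj : ∑ a, (inner ℝ (w a) (u j) : ℝ)^2 = ‖u j‖^2 := by
        have := hpval j
        rw [if_pos hj] at this
        rw [hunorm j, one_pow]
        exact this
      have huj := bessel_eq hw (u j) hpj
      rw [hc1, ← huj]
      simp only [hsk]
      rw [if_pos hj]
    · have hpj : p j = 0 := by rw [hpval j, if_neg hj]
      have hinner : ∀ a, (inner ℝ (w a) (u j) : ℝ) = 0 := by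
        intro a
        have hpj' : ∑ a, (inner ℝ (w a) (u j) : ℝ)^2 = 0 := hpj
        have h2 := (Finset.sum_eq_zero_iff_of_nonneg
          (fun a _ => sq_nonneg _)).mp hpj' a (Finset.mem_univ a)
        exact pow_eq_zero_iff (n:=2) (by norm_num) |>.mp h2
      rw [hc1]
      simp only [hsk]
      rw [if_neg hj]
      simp [hinner]
  have hPkV : Pk * V = U * diagonal sk := by
    ext i j
    have hx := congrArg (fun x => x i) (hcols j)
    have hx' : (Pk * V) i j = sk j * U i j := hx
    rw [hx', Matrix.mul_diagonal, mul_comm]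
  have hPP : Pk * V * Vᵀ = Pk := by
    have := sub_eq_zero.mp hfrob2_zero
    exact this
  rw [← hPP, hPkV, hT]

/-- In the noiseless case `A = 0`, the linear DAE minimizer `W* = P_k(X) X†` acts on
test points `x = U l` in the column span of `X` as the orthogonal projection onto the
top-`k` left singular subspace of `X`. -/
theorem stmt17 {d N r k : ℕ} (hkr : k ≤ r) (hdN : N ≤ d)
    (X : Matrix (Fin d) (Fin N) ℝ)
    (U : Matrix (Fin d) (Fin r) ℝ) (V : Matrix (Fin N) (Fin r) ℝ) (s : Fin r → ℝ)
    (hU : Uᵀ * U = 1) (hV : Vᵀ * V = 1)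
    (hs : StrictAnti s) (hspos : ∀ i, 0 < s i)
    (hSVD : X = U * Matrix.diagonal s * Vᵀ)
    (Pk : Matrix (Fin d) (Fin N) ℝ) (hPk : IsBestRankApprox k X Pk)
    (pinv : Matrix (Fin N) (Fin d) ℝ) (hpinv : IsMoorePenroseInv X pinv) :
    ∀ l : Fin r → ℝ,
      (Pk * pinv) *ᵥ (U *ᵥ l) =
        (U.submatrix id (Fin.castLE hkr) * (U.submatrix id (Fin.castLE hkr))ᵀ) *ᵥ (U *ᵥ l) := by
  classical
  set sk : Fin r → ℝ := fun j => if (j:ℕ) < k then s j else 0 with hsk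
  have hPkT : Pk = U * diagonal sk * Vᵀ :=
    best_rank_eq hkr X U V s hU hV hs hspos hSVD Pk hPk
  set sinv : Fin r → ℝ := fun i => (s i)⁻¹ with hsinv
  have hDDinv : diagonal s * diagonal sinv = 1 := by
    rw [diagonal_mul_diagonal]
    have hfun : (fun i => s i * sinv i) = fun _ => (1:ℝ) :=
      funext fun i => mul_inv_cancel₀ (ne_of_gt (hspos i))
    rw [hfun, diagonal_one]
  have hDinvD : diagonal sinv * diagonal s = 1 := by
    rw [diagonal_mul_diagonal]
    have hfun : (fun i => sinv i * s i) = fun _ => (1:ℝ) :=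
      funext fun i => inv_mul_cancel₀ (ne_of_gt (hspos i))
    rw [hfun, diagonal_one]
  set pinv0 : Matrix (Fin N) (Fin d) ℝ := V * diagonal sinv * Uᵀ with hpinv0_def
  have hXp : X * pinv0 = U * Uᵀ := by
    rw [hSVD, hpinv0_def]
    simp only [Matrix.mul_assoc]
    rw [← Matrix.mul_assoc Vᵀ V _, hV, Matrix.one_mul,
      ← Matrix.mul_assoc (diagonal s) (diagonal sinv) _, hDDinv, Matrix.one_mul]
  have hpX : pinv0 * X = V * Vᵀ := by
    rw [hSVD, hpinv0_def]
    simp only [Matrix.mul_assoc]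
    rw [← Matrix.mul_assoc Uᵀ U _, hU, Matrix.one_mul,
      ← Matrix.mul_assoc (diagonal sinv) (diagonal s) _, hDinvD, Matrix.one_mul]
  have hpinv0 : IsMoorePenroseInv X pinv0 := by
    refine ⟨?_, ?_, ?_, ?_⟩
    · rw [hXp, hSVD]
      simp only [Matrix.mul_assoc]
      rw [← Matrix.mul_assoc Uᵀ U _, hU, Matrix.one_mul]
    · rw [Matrix.mul_assoc, hXp, hpinv0_def]
      simp only [Matrix.mul_assoc]
      rw [← Matrix.mul_assoc Uᵀ U _, hU, Matrix.one_mul]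
    · rw [hXp, transpose_mul, transpose_transpose]
    · rw [Matrix.mul_assoc] at hpX ⊢
      rw [hpX, transpose_mul, transpose_transpose]
  have hpinv_eq : pinv = pinv0 := mp_unique hpinv hpinv0
  set ek : Fin r → ℝ := fun j => if (j:ℕ) < k then (1:ℝ) else 0 with hek
  have hskinv : diagonal sk * diagonal sinv = diagonal ek := by
    have hfun : (fun i => sk i * sinv i) = ek := by
      funext j
      show sk j * sinv j = ek j
      simp only [hsk, hek, hsinv]
      by_cases hj : (j:ℕ) < k
      · rw [if_pos hj, if_pos hj]
        exact mul_inv_cancel₀ (ne_of_gt (hspos j))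
      · rw [if_neg hj, if_neg hj, zero_mul]
    rw [diagonal_mul_diagonal, hfun]
  have hPkpinv : Pk * pinv = U * diagonal ek * Uᵀ := by
    rw [hPkT, hpinv_eq, hpinv0_def]
    simp only [Matrix.mul_assoc]
    rw [← Matrix.mul_assoc Vᵀ V _, hV, Matrix.one_mul,
      ← Matrix.mul_assoc (diagonal sk) (diagonal sinv) _, hskinv]
  have hUk : U.submatrix id (Fin.castLE hkr) * (U.submatrix id (Fin.castLE hkr))ᵀ
      = U * diagonal ek * Uᵀ := by
    ext i i'
    rw [Matrix.mul_apply]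
    simp only [submatrix_apply, transpose_apply, id_eq]
    rw [sum_castLE hkr (fun j => U i j * U i' j), Matrix.mul_apply]
    apply Finset.sum_congr rfl
    intro j _
    rw [Matrix.mul_diagonal, transpose_apply]
    by_cases hj : (j:ℕ) < k
    · rw [if_pos hj]
      simp only [hek, hj, if_true]
      ring
    · rw [if_neg hj]
      simp only [hek, hj, if_false]
      ring
  intro l
  rw [hPkpinv, hUk]
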